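/- Let n ≥ 3 and 1 ≤ h ≤ n. In Q_n, let u = 0ⁿ, let F_e consist of h edges incident to u (the edges from u to its i-th neighbors for i = 1,…,h), let F₁ = {u^(h+1), …, u^n} (the remaining n − h neighbors of u), and F₂ = F₁ ∪ {u}. Then in the graph Q_n − F_e there is no edge between V − (F₁ ∪ F₂) and F₁ Δ F₂ (so F₁ and F₂ are indistinguishable under the PMC model). -/

import Mathlib

/-- The n-dimensional hypercube: vertices are `Fin n → Bool`,
adjacent iff Hamming distance exactly 1. -/
def Qn (n : ℕ) : SimpleGraph (Fin n → Bool) where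
  Adj u v := hammingDist u v = 1
  symm := ⟨fun u v (h : hammingDist u v = 1) => show hammingDist v u = 1 by rwa [hammingDist_comm]⟩
  loopless := ⟨fun u (h : hammingDist u u = 1) => by simp [hammingDist_self] at h⟩

instance (n : ℕ) : DecidableRel (Qn n).Adj :=
  fun u v => inferInstanceAs (Decidable (hammingDist u v = 1))

lemma neighbor_of_zero {n : ℕ} {v : Fin n → Bool}
    (hv : hammingDist v (fun _ => false) = 1) :
    ∃ i : Fin n, v = Function.update (fun _ => false) i true := by
  rw [hammingDist, Finset.card_eq_one] at hv
  obtain ⟨i, hi⟩ := hv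
  refine ⟨i, funext fun j => ?_⟩
  by_cases hij : j = i
  · subst hij
    have : j ∈ Finset.filter (fun k => v k ≠ (fun _ => false) k) Finset.univ := by
      rw [hi]; exact Finset.mem_singleton_self j
    simp at this
    simp [this, Function.update_self]
  · have : j ∉ Finset.filter (fun k => v k ≠ (fun _ => false) k) Finset.univ := by
      rw [hi]; simpa using hij
    simp at this
    simp [this, Function.update_of_ne hij]

theorem indistinguishable_construction (n h : ℕ) (hn : 3 ≤ n) (hh1 : 1 ≤ h)
    (hhn : h ≤ n) :
    letI u : Fin n → Bool := fun _ => false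
    letI Fe : Set (Sym2 (Fin n → Bool)) :=
      {e | ∃ i : Fin n, (i : ℕ) < h ∧ e = s(u, Function.update u i true)}
    letI F₁ : Set (Fin n → Bool) :=
      {v | ∃ i : Fin n, h ≤ (i : ℕ) ∧ v = Function.update u i true}
    letI F₂ : Set (Fin n → Bool) := F₁ ∪ {u}
    ¬ ∃ x, x ∉ F₁ ∪ F₂ ∧ ∃ y ∈ symmDiff F₁ F₂, ((Qn n).deleteEdges Fe).Adj x y := by
  set u : Fin n → Bool := fun _ => false with hu
  set F₁ : Set (Fin n → Bool) :=
    {v | ∃ i : Fin n, h ≤ (i : ℕ) ∧ v = Function.update u i true} with hF₁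
  have huF₁ : u ∉ F₁ := by
    rintro ⟨i, -, hi⟩
    have := congrFun hi i
    simp [u, Function.update_self] at this
  rintro ⟨x, hx, y, hy, hadj⟩
  -- symmDiff F₁ F₂ = {u}
  have hyu : y = u := by
    rw [Set.mem_symmDiff] at hy
    rcases hy with ⟨hy1, hy2⟩ | ⟨hy2, hy1⟩
    · exact absurd (Or.inl hy1) hy2
    · rcases hy2 with hy2 | hy2
      · exact absurd hy2 hy1
      · exact hy2
  subst hyu
  rw [SimpleGraph.deleteEdges_adj] at hadj
  obtain ⟨hadj', hne⟩ := hadj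
  have hd : hammingDist x u = 1 := hadj'
  obtain ⟨i, hi⟩ := neighbor_of_zero hd
  by_cases hih : (i : ℕ) < h
  · exact hne ⟨i, hih, by rw [hi, Sym2.eq_swap]⟩
  · exact hx (Or.inl ⟨i, le_of_not_gt hih, hi⟩)
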